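/- Let q and n be positive integers and let P be a noncrossing partition of {1,…,2qn} all of whose blocks have exactly 2q elements. Define P' to be the partition of {1,…,qn} whose blocks are obtained from the blocks of P by deleting all even numbers and replacing each odd number 2j−1 by j. Then P' is a noncrossing partition of {1,…,qn} all of whose blocks have exactly q elements. -/

import Mathlib

/-- A finpartition of a finite set of naturals is noncrossing (planar) if there are no
elements `a < b < c < d` with `a, c` in one block and `b, d` in a different block. -/
def IsNoncrossing {s : Finset ℕ} (P : Finpartition s) : Prop :=
  ∀ a b c d : ℕ, a < b → b < c → c < d →
    ∀ B₁ ∈ P.parts, ∀ B₂ ∈ P.parts,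
      a ∈ B₁ → c ∈ B₁ → b ∈ B₂ → d ∈ B₂ → B₁ = B₂

/-- A finset of naturals, all of whose "gaps" between consecutive elements are odd
and whose cardinality is even, contains exactly half odd elements. -/
lemma parity_count (B : Finset ℕ) (hcard : Even B.card)
    (hgap : ∀ x ∈ B, ∀ y ∈ B, x < y → (∀ z ∈ B, z ≤ x ∨ y ≤ z) → Odd (y - x)) :
    (B.filter (fun x => Odd x)).card * 2 = B.card := by
  induction B using Finset.strongInduction with
  | _ B ih =>
    rcases B.eq_empty_or_nonempty with rfl | hB
    · simp
    · set m := B.min' hB with hm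
      have hmB : m ∈ B := B.min'_mem hB
      have hB' : (B.erase m).Nonempty := by
        rw [Finset.nonempty_iff_ne_empty]
        intro he
        have h1 : B.card - 1 = 0 := by rw [← Finset.card_erase_of_mem hmB, he]; simp
        have h2 : 0 < B.card := Finset.card_pos.2 hB
        rcases hcard with ⟨k, hk⟩
        omega
      set m' := (B.erase m).min' hB' with hm'
      have hm'e : m' ∈ B.erase m := (B.erase m).min'_mem hB'
      have hm'B : m' ∈ B := Finset.mem_of_mem_erase hm'e
      have hmm' : m < m' := by
        have h1 : m ≤ m' := B.min'_le m' hm'B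
        have h2 : m' ≠ m := (Finset.mem_erase.1 hm'e).1
        omega
      have adj : ∀ z ∈ B, z ≤ m ∨ m' ≤ z := by
        intro z hz
        by_cases hzm : z = m
        · exact Or.inl (le_of_eq hzm)
        · exact Or.inr ((B.erase m).min'_le z (Finset.mem_erase.2 ⟨hzm, hz⟩))
      have hodd : Odd (m' - m) := hgap m hmB m' hm'B hmm' adj
      set B'' := (B.erase m).erase m' with hB''
      have hsub : B'' ⊆ B := fun z hz =>
        Finset.mem_of_mem_erase (Finset.mem_of_mem_erase hz)
      have hmnot : m ∉ B'' := fun h => by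
        have := Finset.mem_of_mem_erase h; simp at this
      have hm'not : m' ∉ B'' := fun h => by simp [hB''] at h
      have hss : B'' ⊂ B := Finset.ssubset_iff_of_subset hsub |>.2 ⟨m, hmB, hmnot⟩
      have hcard'' : B''.card = B.card - 2 := by
        rw [hB'', Finset.card_erase_of_mem hm'e, Finset.card_erase_of_mem hmB]
        omega
      have hcard2 : 2 ≤ B.card := by
        have : m' ∈ B.erase m := hm'e
        have h1 : 1 ≤ (B.erase m).card := Finset.card_pos.2 ⟨m', this⟩
        have := Finset.card_erase_of_mem hmB
        omega
      have heven'' : Even B''.card := by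
        rcases hcard with ⟨k, hk⟩
        exact ⟨k - 1, by omega⟩
      have hgap'' : ∀ x ∈ B'', ∀ y ∈ B'', x < y →
          (∀ z ∈ B'', z ≤ x ∨ y ≤ z) → Odd (y - x) := by
        intro x hx y hy hxy hadj
        refine hgap x (hsub hx) y (hsub hy) hxy ?_
        intro z hz
        by_cases hzm : z = m
        · exact Or.inl (by rw [hzm]; exact B.min'_le x (hsub hx))
        by_cases hzm' : z = m'
        · refine Or.inl (by
            rw [hzm']
            exact (B.erase m).min'_le x (Finset.mem_of_mem_erase hx))
        · exact hadj z (Finset.mem_erase.2 ⟨hzm', Finset.mem_erase.2 ⟨hzm, hz⟩⟩)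
      have ihB := ih B'' hss heven'' hgap''
      have hBeq : insert m (insert m' B'') = B := by
        rw [hB'', Finset.insert_erase hm'e, Finset.insert_erase hmB]
      have hone : (Odd m ∧ ¬ Odd m') ∨ (¬ Odd m ∧ Odd m') := by
        rw [Nat.odd_iff] at hodd ⊢
        rw [Nat.odd_iff]
        omega
      have hmnotins : m ∉ insert m' B'' := by
        simp only [Finset.mem_insert]
        rintro (h | h)
        · omega
        · exact hmnot h
      have hc1 : (insert m' B'').card = B''.card + 1 :=
        Finset.card_insert_of_notMem hm'not
      have hc2 : (insert m (insert m' B'')).card = B''.card + 2 := by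
        rw [Finset.card_insert_of_notMem hmnotins, hc1]
      rw [← hBeq, Finset.filter_insert, Finset.filter_insert]
      rw [Finset.card_insert_of_notMem hmnotins]
      rcases hone with ⟨h1, h2⟩ | ⟨h1, h2⟩
      · rw [if_pos h1, if_neg h2]
        rw [Finset.card_insert_of_notMem (fun h => hmnot (Finset.mem_filter.1 h).1)]
        omega
      · rw [if_neg h1, if_pos h2]
        rw [Finset.card_insert_of_notMem
          (fun h => hm'not (Finset.mem_filter.1 h).1)]
        omega

lemma gap_odd (q n : ℕ) (hq : 0 < q)
    (P : Finpartition (Finset.Icc 1 (2 * q * n)))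
    (hP : IsNoncrossing P) (hblocks : ∀ B ∈ P.parts, B.card = 2 * q)
    (B : Finset ℕ) (hB : B ∈ P.parts) :
    ∀ x ∈ B, ∀ y ∈ B, x < y → (∀ z ∈ B, z ≤ x ∨ y ≤ z) → Odd (y - x) := by
  intro x hx y hy hxy hadj
  have hBsub : B ⊆ Finset.Icc 1 (2 * q * n) := P.le hB
  have hx1 : 1 ≤ x := (Finset.mem_Icc.1 (hBsub hx)).1
  have hy2 : y ≤ 2 * q * n := (Finset.mem_Icc.1 (hBsub hy)).2
  set T := P.parts.filter (fun C => C ⊆ Finset.Ioo x y) with hT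
  have hunion : Finset.Ioo x y = T.biUnion id := by
    apply Finset.Subset.antisymm
    · intro z hz
      rw [Finset.mem_Ioo] at hz
      have hzIcc : z ∈ Finset.Icc 1 (2 * q * n) := Finset.mem_Icc.2 ⟨by omega, by omega⟩
      obtain ⟨C, hC, hzC⟩ := P.exists_mem hzIcc
      have hCB : C ≠ B := by
        intro h
        subst h
        rcases hadj z hzC with h | h <;> omega
      have hCsub : C ⊆ Finset.Ioo x y := by
        intro w hw
        rw [Finset.mem_Ioo]
        by_contra hcon
        push_neg at hcon
        rcases lt_or_ge x w with hxw | hwx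
        · -- w ≥ y
          have hyw : y ≤ w := hcon hxw
          have hyw' : y < w := by
            rcases eq_or_lt_of_le hyw with h | h
            · exact absurd (P.eq_of_mem_parts hC hB (h ▸ hw) hy) hCB
            · exact h
          exact hCB (hP x z y w (by omega) (by omega) (by omega) B hB C hC hx hy hzC hw).symm
        · -- w ≤ x
          have hwx' : w < x := by
            rcases eq_or_lt_of_le hwx with h | h
            · exact absurd (P.eq_of_mem_parts hC hB (h ▸ hw) hx) hCB
            · exact h
          exact hCB (hP w x z y (by omega) (by omega) (by omega) C hC B hB hw hzC hx hy)
      rw [Finset.mem_biUnion]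
      exact ⟨C, Finset.mem_filter.2 ⟨hC, hCsub⟩, hzC⟩
    · intro z hz
      rw [Finset.mem_biUnion] at hz
      obtain ⟨C, hC, hzC⟩ := hz
      exact (Finset.mem_filter.1 hC).2 hzC
  have hdisj : ∀ C1 ∈ T, ∀ C2 ∈ T, C1 ≠ C2 → Disjoint (id C1) (id C2) := by
    intro C1 hC1 C2 hC2 hne
    exact P.disjoint (Finset.mem_filter.1 hC1).1 (Finset.mem_filter.1 hC2).1 hne
  have hcard : (Finset.Ioo x y).card = ∑ C ∈ T, C.card := by
    rw [hunion]; exact Finset.card_biUnion hdisj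
  have hsum : ∑ C ∈ T, C.card = T.card * (2 * q) := by
    rw [Finset.sum_congr rfl (fun C hC => hblocks C (Finset.mem_filter.1 hC).1)]
    rw [Finset.sum_const, smul_eq_mul]
  have hIoo : (Finset.Ioo x y).card = y - x - 1 := by
    rw [Nat.card_Ioo]
  have h4 : y - x - 1 = 2 * (T.card * q) := by
    rw [← hIoo, hcard, hsum]; ring
  exact ⟨T.card * q, by omega⟩

theorem halved_partition_is_noncrossing_q_partition (q n : ℕ) (hq : 0 < q) (hn : 0 < n)
    (P : Finpartition (Finset.Icc 1 (2 * q * n)))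
    (hP : IsNoncrossing P) (hblocks : ∀ B ∈ P.parts, B.card = 2 * q) :
    ∃ P' : Finpartition (Finset.Icc 1 (q * n)),
      P'.parts = P.parts.image (fun B => (B.filter (fun x => Odd x)).image (fun x => (x + 1) / 2)) ∧
      IsNoncrossing P' ∧ ∀ B ∈ P'.parts, B.card = q := by
  have hqn2 : 2 * q * n = 2 * (q * n) := by ring
  set f : Finset ℕ → Finset ℕ :=
    fun B => (B.filter (fun x => Odd x)).image (fun x => (x + 1) / 2) with hf
  -- each block has exactly q odd elements
  have hoddcard : ∀ B ∈ P.parts, (B.filter (fun x => Odd x)).card = q := by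
    intro B hB
    have h1 := parity_count B (by rw [hblocks B hB]; exact ⟨q, by ring⟩)
      (gap_odd q n hq P hP hblocks B hB)
    rw [hblocks B hB] at h1
    omega
  have hinjOn : ∀ B : Finset ℕ, Set.InjOn (fun x => (x + 1) / 2)
      ↑(B.filter (fun x => Odd x)) := by
    intro B x hx y hy hxy
    simp only [Finset.coe_filter, Set.mem_setOf_eq] at hx hy
    rw [Nat.odd_iff] at hx hy
    simp only at hxy
    omega
  have hfcard : ∀ B ∈ P.parts, (f B).card = q := by
    intro B hB
    rw [hf]
    rw [Finset.card_image_of_injOn (hinjOn B)]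
    exact hoddcard B hB
  -- membership characterization
  have hmemf : ∀ B ∈ P.parts, ∀ j : ℕ, j ∈ f B ↔ 1 ≤ j ∧ 2 * j - 1 ∈ B := by
    intro B hB j
    constructor
    · intro hj
      rw [hf] at hj
      simp only [Finset.mem_image, Finset.mem_filter] at hj
      obtain ⟨x, ⟨hxB, hxodd⟩, hxj⟩ := hj
      have hx1 : 1 ≤ x := (Finset.mem_Icc.1 (P.le hB hxB)).1
      rw [Nat.odd_iff] at hxodd
      have : 2 * j - 1 = x := by omega
      exact ⟨by omega, this ▸ hxB⟩
    · rintro ⟨hj1, hjB⟩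
      rw [hf]
      simp only [Finset.mem_image, Finset.mem_filter]
      exact ⟨2 * j - 1, ⟨hjB, by rw [Nat.odd_iff]; omega⟩, by omega⟩
  -- construct the partition
  refine ⟨⟨P.parts.image f, ?_, ?_, ?_⟩, rfl, ?_, ?_⟩
  · -- supIndep
    rw [Finset.supIndep_iff_pairwiseDisjoint]
    intro A hA B hB hne
    simp only [Finset.coe_image, Set.mem_image, Finset.mem_coe] at hA hB
    obtain ⟨B1, hB1, rfl⟩ := hA
    obtain ⟨B2, hB2, rfl⟩ := hB
    have hB12 : B1 ≠ B2 := fun h => hne (by rw [h])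
    have hd : Disjoint B1 B2 := P.disjoint hB1 hB2 hB12
    rw [Function.onFun, id_eq, id_eq, Finset.disjoint_left]
    intro j hj1 hj2
    rw [hmemf B1 hB1 j] at hj1
    rw [hmemf B2 hB2 j] at hj2
    exact Finset.disjoint_left.1 hd hj1.2 hj2.2
  · -- sup_parts
    ext j
    rw [Finset.mem_sup]
    constructor
    · rintro ⟨A, hA, hjA⟩
      simp only [Finset.mem_image] at hA
      obtain ⟨B, hB, rfl⟩ := hA
      simp only [id_eq] at hjA
      rw [hmemf B hB j] at hjA
      obtain ⟨hj1, hjB⟩ := hjA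
      have := (Finset.mem_Icc.1 (P.le hB hjB)).2
      rw [Finset.mem_Icc]
      omega
    · intro hj
      rw [Finset.mem_Icc] at hj
      have hx : 2 * j - 1 ∈ Finset.Icc 1 (2 * q * n) := Finset.mem_Icc.2 ⟨by omega, by omega⟩
      obtain ⟨B, hB, hxB⟩ := P.exists_mem hx
      exact ⟨f B, Finset.mem_image_of_mem f hB, (hmemf B hB j).2 ⟨hj.1, hxB⟩⟩
  · -- not_bot_mem
    intro h
    simp only [Finset.bot_eq_empty, Finset.mem_image] at h
    obtain ⟨B, hB, hBe⟩ := h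
    have := hfcard B hB
    rw [hBe, Finset.card_empty] at this
    omega
  · -- IsNoncrossing
    intro a b c d hab hbc hcd B₁ hB₁ B₂ hB₂ haB₁ hcB₁ hbB₂ hdB₂
    simp only [Finset.mem_image] at hB₁ hB₂
    obtain ⟨C₁, hC₁, rfl⟩ := hB₁
    obtain ⟨C₂, hC₂, rfl⟩ := hB₂
    rw [hmemf C₁ hC₁] at haB₁ hcB₁
    rw [hmemf C₂ hC₂] at hbB₂ hdB₂
    have := hP (2 * a - 1) (2 * b - 1) (2 * c - 1) (2 * d - 1)
      (by omega) (by omega) (by omega) C₁ hC₁ C₂ hC₂ haB₁.2 hcB₁.2 hbB₂.2 hdB₂.2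
    rw [this]
  · -- cards
    intro B hB
    simp only [Finset.mem_image] at hB
    obtain ⟨C, hC, rfl⟩ := hB
    exact hfcard C hC
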